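/- Let X be a Hausdorff topological space containing an uncountable closed discrete subspace of cardinality ℵ₁. Then the compact space (ω₁ + 1)^{ω₁} (with the product topology, ω₁ + 1 carrying the order topology) embeds topologically into the hyperspace CL(X) of nonempty closed subsets of X equipped with the Fell topology. -/

import Mathlib

/-- The hyperspace of nonempty closed subsets of `X`. -/
def CL (X : Type*) [TopologicalSpace X] : Type _ := {A : Set X // A.Nonempty ∧ IsClosed A}

/-- The Fell topology on `CL X`, generated by the subbase of sets
`U⁻ = {A : A ∩ U ≠ ∅}` for `U` open, and `(Kᶜ)⁺ = {A : A ∩ K = ∅}` for `K` compact. -/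
def FellTopology (X : Type*) [TopologicalSpace X] : TopologicalSpace (CL X) :=
  TopologicalSpace.generateFrom
    ({S | ∃ U : Set X, IsOpen U ∧ S = {A : CL X | (A.1 ∩ U).Nonempty}} ∪
     {S | ∃ K : Set X, IsCompact K ∧ S = {A : CL X | A.1 ∩ K = ∅}})

open Set Topology TopologicalSpace

/-- If a Hausdorff space `X` contains a closed discrete subspace of cardinality `ℵ₁`,
then `(ω₁ + 1)^{ω₁}` embeds into `(CL X, τ_F)`. -/
theorem stmt_5 {X : Type*} [TopologicalSpace X] [T2Space X]
    (D : Set X) (hDcl : IsClosed D) (hDdisc : DiscreteTopology D)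
    (hcard : Cardinal.mk D = Cardinal.aleph 1) :
    ∃ f : (Quotient.out (Cardinal.aleph 1) → Set.Iic (Cardinal.aleph 1).ord) → CL X,
      @Topology.IsEmbedding _ _ _ (FellTopology X) f := by
  classical
  letI : TopologicalSpace (CL X) := FellTopology X
  set o : Ordinal := (Cardinal.aleph 1).ord with ho
  set ι : Type _ := Quotient.out (Cardinal.aleph 1) with hι
  set T : Type _ := o.ToType with hT
  set C : Type _ := Option (ι × T) with hC
  -- every subset of `D` is closed in `X`
  have hclosed : ∀ S : Set X, S ⊆ D → IsClosed S := by
    intro S hS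
    have hrepr : S = Subtype.val '' (Subtype.val ⁻¹' S : Set D) := by
      rw [Set.image_preimage_eq_inter_range, Subtype.range_val]
      exact (Set.inter_eq_left.mpr hS).symm
    rw [hrepr]
    exact hDcl.isClosedEmbedding_subtypeVal.isClosedMap _ (isClosed_discrete _)
  -- an enumeration map
  let j : T ≃o Set.Iio o := (Ordinal.ToType.mk (o := o)).symm
  -- cardinality computation and an injection of `C` into `D`
  have hmkC : Nonempty (C ≃ D) := by
    rw [← Cardinal.lift_mk_eq']
    simp only [hC, hι, hT, ho, Cardinal.mk_option, Cardinal.mk_prod, Cardinal.mk_out,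
      Cardinal.mk_toType, Cardinal.card_ord, hcard, Cardinal.lift_add, Cardinal.lift_mul,
      Cardinal.lift_one, Cardinal.lift_lift, Cardinal.lift_aleph, Ordinal.lift_one]
    rw [Cardinal.mul_eq_self (Cardinal.aleph0_le_aleph 1),
      Cardinal.add_one_eq (Cardinal.aleph0_le_aleph 1)]
  obtain ⟨ψ⟩ := hmkC
  let e : C → X := fun c => (ψ c : X)
  have he : Function.Injective e := Subtype.coe_injective.comp ψ.injective
  have heD : ∀ c, e c ∈ D := fun c => (ψ c).2
  -- the membership predicate
  let P : C → (ι → Set.Iic o) → Prop := fun c x =>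
    match c with
    | none => True
    | some (i, t) => ((j t : Set.Iio o) : Ordinal) < (x i : Ordinal)
  -- openness of the predicate sets
  have hPopen : ∀ c : C, IsOpen {x : ι → Set.Iic o | P c x} ∧
      IsOpen {x : ι → Set.Iic o | ¬ P c x} := by
    rintro (_ | ⟨i, t⟩)
    · constructor
      · have : {x : ι → Set.Iic o | P none x} = Set.univ := by ext x; simp [P]
        rw [this]; exact isOpen_univ
      · have : {x : ι → Set.Iic o | ¬ P none x} = ∅ := by ext x; simp [P]
        rw [this]; exact isOpen_empty
    · constructor
      · have : {x : ι → Set.Iic o | P (some (i, t)) x} =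
            (fun x : ι → Set.Iic o => x i) ⁻¹'
              (Subtype.val ⁻¹' Set.Ioi ((j t : Set.Iio o) : Ordinal)) := rfl
        rw [this]
        exact (isOpen_Ioi.preimage continuous_subtype_val).preimage (continuous_apply i)
      · have : {x : ι → Set.Iic o | ¬ P (some (i, t)) x} =
            (fun x : ι → Set.Iic o => x i) ⁻¹'
              (Subtype.val ⁻¹' Set.Iio (Order.succ ((j t : Set.Iio o) : Ordinal))) := by
          ext x
          simp only [P, Set.mem_setOf_eq, Set.mem_preimage, Set.mem_Iio, not_lt,
            Order.lt_succ_iff]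
        rw [this]
        exact (isOpen_Iio.preimage continuous_subtype_val).preimage (continuous_apply i)
  -- the embedding
  let f : (ι → Set.Iic o) → CL X := fun x =>
    ⟨e '' {c | P c x}, ⟨e none, Set.mem_image_of_mem e trivial⟩,
      hclosed _ (by rintro z ⟨c, _, rfl⟩; exact heD c)⟩
  -- continuity of `f`
  have hfcont : Continuous f := by
    show Continuous[_, FellTopology X] f
    unfold FellTopology
    rw [continuous_generateFrom_iff]
    rintro S (⟨U, hUo, rfl⟩ | ⟨K, hK, rfl⟩)
    · have : f ⁻¹' {A : CL X | (A.1 ∩ U).Nonempty} = ⋃ c ∈ {c : C | e c ∈ U}, {x | P c x} := by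
        ext x
        simp only [Set.mem_preimage, Set.mem_setOf_eq, Set.mem_iUnion, exists_prop]
        constructor
        · rintro ⟨z, ⟨c, hPc, rfl⟩, hzU⟩
          exact ⟨c, hzU, hPc⟩
        · rintro ⟨c, hcU, hPc⟩
          exact ⟨e c, ⟨c, hPc, rfl⟩, hcU⟩
      rw [this]
      exact isOpen_biUnion fun c _ => (hPopen c).1
    · have hF : {c : C | e c ∈ K}.Finite := by
        have hKD : (K ∩ D).Finite := by
          have hdisc : DiscreteTopology ↥(K ∩ D) :=
            DiscreteTopology.of_subset hDdisc Set.inter_subset_right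
          exact (hK.inter_right hDcl).finite (isDiscrete_iff_discreteTopology.mpr hdisc)
        have : {c : C | e c ∈ K} = e ⁻¹' (K ∩ D) := by
          ext c; simp [Set.mem_preimage, heD c]
        rw [this]
        exact hKD.preimage he.injOn
      have : f ⁻¹' {A : CL X | A.1 ∩ K = ∅} = ⋂ c ∈ {c : C | e c ∈ K}, {x | ¬ P c x} := by
        ext x
        simp only [Set.mem_preimage, Set.mem_setOf_eq, Set.mem_iInter,
          Set.eq_empty_iff_forall_notMem, Set.mem_inter_iff, not_and]
        constructor
        · intro hx c hcK hPc
          exact hx (e c) ⟨c, hPc, rfl⟩ hcK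
        · rintro hx z ⟨c, hPc, rfl⟩ hzK
          exact hx c hzK hPc
      rw [this]
      exact hF.isOpen_biInter fun c _ => (hPopen c).2
  -- open sets isolating the points of `D`
  have hUex : ∀ c : C, ∃ U : Set X, IsOpen U ∧ U ∩ D = {e c} := by
    intro c
    have hopen : IsOpen {(⟨e c, heD c⟩ : D)} := isOpen_discrete _
    rw [isOpen_induced_iff] at hopen
    obtain ⟨V, hV, hVe⟩ := hopen
    refine ⟨V, hV, ?_⟩
    ext z
    constructor
    · rintro ⟨hzV, hzD⟩
      have : (⟨z, hzD⟩ : D) ∈ Subtype.val ⁻¹' V := hzV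
      rw [hVe, Set.mem_singleton_iff] at this
      exact congrArg Subtype.val this
    · intro hz
      rw [Set.mem_singleton_iff] at hz
      subst hz
      refine ⟨?_, heD c⟩
      have : (⟨e c, heD c⟩ : D) ∈ Subtype.val ⁻¹' V := by
        rw [hVe]; exact Set.mem_singleton _
      exact this
  choose U hUo hUD using hUex
  have heU : ∀ c, e c ∈ U c := by
    intro c
    have : e c ∈ U c ∩ D := by rw [hUD c]; exact Set.mem_singleton _
    exact this.1
  -- the separating map
  let g : CL X → (C → Prop) × (C → Prop) := fun A =>
    (fun c => (A.1 ∩ U c).Nonempty, fun c => A.1 ∩ {e c} = ∅)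
  have hgcont : Continuous g := by
    refine Continuous.prodMk (continuous_pi fun c => ?_) (continuous_pi fun c => ?_)
    · rw [continuous_Prop]
      exact isOpen_generateFrom_of_mem (Or.inl ⟨U c, hUo c, rfl⟩)
    · rw [continuous_Prop]
      exact isOpen_generateFrom_of_mem (Or.inr ⟨{e c}, isCompact_singleton, rfl⟩)
  -- the subspace where second coordinate is the negation of the first
  let Z : Set ((C → Prop) × (C → Prop)) := {p | ∀ c, p.2 c ↔ ¬ p.1 c}
  haveI hT2Z : T2Space Z := by
    constructor
    intro a b hab
    have hex : ∃ c, ¬ (a.1.1 c ↔ b.1.1 c) := by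
      by_contra hcon
      push_neg at hcon
      apply hab
      apply Subtype.ext
      have h1 : a.1.1 = b.1.1 := funext fun c => propext (hcon c)
      refine Prod.ext h1 (funext fun c => propext ?_)
      rw [a.2 c, b.2 c, h1]
    obtain ⟨c, hc⟩ := hex
    have hO1 : IsOpen {z : Z | z.1.1 c} :=
      continuous_Prop.mp ((continuous_apply c).comp (continuous_fst.comp continuous_subtype_val))
    have hO2 : IsOpen {z : Z | z.1.2 c} :=
      continuous_Prop.mp ((continuous_apply c).comp (continuous_snd.comp continuous_subtype_val))
    have hdisj : Disjoint {z : Z | z.1.1 c} {z : Z | z.1.2 c} := by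
      rw [Set.disjoint_left]
      intro z hz1 hz2
      exact ((z.2 c).mp hz2) hz1
    by_cases hp : a.1.1 c
    · have hq : ¬ b.1.1 c := fun h => hc ⟨fun _ => h, fun _ => hp⟩
      exact ⟨_, _, hO1, hO2, hp, (b.2 c).mpr hq, hdisj⟩
    · have hq : b.1.1 c := by
        by_contra h
        exact hc ⟨fun h' => absurd h' hp, fun h' => absurd h' h⟩
      exact ⟨_, _, hO2, hO1, (a.2 c).mpr hp, hq, hdisj.symm⟩
  -- the map into `Z`
  let m : (ι → Set.Iic o) → Z := fun x =>
    ⟨(fun c => P c x, fun c => ¬ P c x), fun c => Iff.rfl⟩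
  have hmcont : Continuous m := by
    refine Continuous.subtype_mk ?_ _
    exact Continuous.prodMk (continuous_pi fun c => continuous_Prop.mpr (hPopen c).1)
      (continuous_pi fun c => continuous_Prop.mpr (hPopen c).2)
  have hminj : Function.Injective m := by
    intro x y hxy
    have hP : ∀ c, P c x ↔ P c y := by
      intro c
      have := congrFun (congrArg (fun z : Z => z.1.1) hxy) c
      exact iff_of_eq this
    funext i
    apply Subtype.ext
    rcases lt_trichotomy ((x i : Ordinal)) ((y i : Ordinal)) with h | h | h
    · exfalso
      have hxo : (x i : Ordinal) < o := lt_of_lt_of_le h (y i).2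
      set t : T := j.symm ⟨(x i : Ordinal), hxo⟩ with htdef
      have ht : ((j t : Set.Iio o) : Ordinal) = (x i : Ordinal) := by
        rw [htdef, OrderIso.apply_symm_apply]
      have hPy : P (some (i, t)) y := by show _ < _; rw [ht]; exact h
      have hPx : P (some (i, t)) x := (hP (some (i, t))).mpr hPy
      have : ((j t : Set.Iio o) : Ordinal) < (x i : Ordinal) := hPx
      rw [ht] at this
      exact lt_irrefl _ this
    · exact h
    · exfalso
      have hyo : (y i : Ordinal) < o := lt_of_lt_of_le h (x i).2
      set t : T := j.symm ⟨(y i : Ordinal), hyo⟩ with htdef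
      have ht : ((j t : Set.Iio o) : Ordinal) = (y i : Ordinal) := by
        rw [htdef, OrderIso.apply_symm_apply]
      have hPx : P (some (i, t)) x := by show _ < _; rw [ht]; exact h
      have hPy : P (some (i, t)) y := (hP (some (i, t))).mp hPx
      have : ((j t : Set.Iio o) : Ordinal) < (y i : Ordinal) := hPy
      rw [ht] at this
      exact lt_irrefl _ this
  -- compactness of the domain
  haveI : CompactSpace (Set.Iic o) := by
    apply isCompact_iff_compactSpace.mp
    rw [← Set.Icc_bot]
    exact isCompact_Icc
  have hmemb : Topology.IsEmbedding m := (hmcont.isClosedEmbedding hminj).isEmbedding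
  -- `g ∘ f` equals `Subtype.val ∘ m`
  have hcomp : g ∘ f = Subtype.val ∘ m := by
    funext x
    refine Prod.ext (funext fun c => propext ?_) (funext fun c => propext ?_)
    · show ((e '' {c' | P c' x}) ∩ U c).Nonempty ↔ P c x
      constructor
      · rintro ⟨z, ⟨c', hPc', rfl⟩, hzU⟩
        have : e c' ∈ U c ∩ D := ⟨hzU, heD c'⟩
        rw [hUD c, Set.mem_singleton_iff] at this
        rwa [he this] at hPc'
      · intro hPc
        exact ⟨e c, ⟨c, hPc, rfl⟩, heU c⟩
    · show (e '' {c' | P c' x}) ∩ {e c} = ∅ ↔ ¬ P c x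
      constructor
      · intro hemp hPc
        have : e c ∈ (e '' {c' | P c' x}) ∩ {e c} := ⟨⟨c, hPc, rfl⟩, rfl⟩
        rw [hemp] at this
        exact this
      · intro hnP
        rw [Set.eq_empty_iff_forall_notMem]
        rintro z ⟨⟨c', hPc', rfl⟩, hz⟩
        rw [Set.mem_singleton_iff] at hz
        rw [he hz] at hPc'
        exact hnP hPc'
  refine ⟨f, ?_⟩
  have : Topology.IsEmbedding (g ∘ f) := by
    rw [hcomp]
    exact Topology.IsEmbedding.subtypeVal.comp hmemb
  exact Topology.IsEmbedding.of_comp hfcont hgcont this
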